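/- Let Φ_{n−1} be a monic polynomial of degree n−1 with all its zeros in the open unit disk 𝔻 = {z : |z| < 1}, and let β ∈ ℂ with |β| = 1. Define the paraorthogonal polynomial Φ_n(z; β) = z·Φ_{n−1}(z) − β·Φ_{n−1}*(z). Then every zero of Φ_n(·; β) lies on the unit circle. -/

import Mathlib

open Polynomial Complex

noncomputable def reversedPoly (p : Polynomial ℂ) : Polynomial ℂ :=
  (p.map (starRingEnd ℂ)).reverse

lemma reverse_X_sub_C' (c : ℂ) : reverse (X - C c) = 1 - C c * X := by
  unfold reverse; simp [natDegree_X_sub_C]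

lemma reversedPoly_prod (s : Multiset ℂ) :
    reversedPoly ((s.map (fun r => X - C r)).prod)
      = (s.map (fun r => 1 - C ((starRingEnd ℂ) r) * X)).prod := by
  induction s using Multiset.induction with
  | empty => unfold reversedPoly reverse; simp
  | cons a s ih =>
      simp only [Multiset.map_cons, Multiset.prod_cons]
      rw [reversedPoly, Polynomial.map_mul, reverse_mul_of_domain, ← ih, reversedPoly]
      congr 1
      rw [Polynomial.map_sub, map_X, map_C, reverse_X_sub_C']

lemma key_normSq (z r : ℂ) :
    Complex.normSq (1 - (starRingEnd ℂ) r * z) - Complex.normSq (z - r)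
      = (1 - Complex.normSq z) * (1 - Complex.normSq r) := by
  simp [Complex.normSq_apply, Complex.sub_re, Complex.sub_im, Complex.mul_re, Complex.mul_im]
  ring

lemma norm_le_of_normSq_le {a b : ℂ} (h : Complex.normSq a ≤ Complex.normSq b) : ‖a‖ ≤ ‖b‖ := by
  rw [Complex.norm_def, Complex.norm_def]
  exact Real.sqrt_le_sqrt h

lemma prod_map_le (s : Multiset ℂ) (f g : ℂ → ℝ)
    (h0 : ∀ a ∈ s, 0 ≤ f a) (h1 : ∀ a ∈ s, f a ≤ g a) :
    (s.map f).prod ≤ (s.map g).prod := by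
  induction s using Multiset.induction with
  | empty => simp
  | cons a s ih =>
      simp only [Multiset.map_cons, Multiset.prod_cons]
      have hf0 : 0 ≤ (s.map f).prod := by
        apply Multiset.prod_nonneg
        intro x hx
        obtain ⟨a', ha', rfl⟩ := Multiset.mem_map.1 hx
        exact h0 a' (Multiset.mem_cons_of_mem ha')
      have hih := ih (fun a ha => h0 a (Multiset.mem_cons_of_mem ha))
        (fun a ha => h1 a (Multiset.mem_cons_of_mem ha))
      exact mul_le_mul (h1 a (Multiset.mem_cons_self a s)) hih hf0
        (le_trans (h0 a (Multiset.mem_cons_self a s)) (h1 a (Multiset.mem_cons_self a s)))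

lemma prod_map_pos (s : Multiset ℂ) (f : ℂ → ℝ) (h : ∀ a ∈ s, 0 < f a) :
    0 < (s.map f).prod := by
  induction s using Multiset.induction with
  | empty => simp
  | cons a s ih =>
      simp only [Multiset.map_cons, Multiset.prod_cons]
      exact mul_pos (h a (Multiset.mem_cons_self a s))
        (ih (fun a ha => h a (Multiset.mem_cons_of_mem ha)))

lemma norm_multiset_prod' (s : Multiset ℂ) : ‖s.prod‖ = (s.map (fun x => ‖x‖)).prod := by
  induction s using Multiset.induction with
  | empty => simp
  | cons a s ih => simp [norm_mul, ih]

theorem paraorthogonal_zeros_on_circle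
    (Φ : Polynomial ℂ) (hmonic : Φ.Monic)
    (hroots : ∀ z : ℂ, Φ.eval z = 0 → ‖z‖ < 1)
    (β : ℂ) (hβ : ‖β‖ = 1) :
    ∀ z : ℂ, (X * Φ - C β * reversedPoly Φ).eval z = 0 → ‖z‖ = 1 := by
  intro z hz
  have hsplit : Φ = (Φ.roots.map (fun r => X - C r)).prod :=
    (Splits.eq_prod_roots_of_monic (IsAlgClosed.splits Φ) hmonic).trans (by simp)
  set s := Φ.roots with hs
  have hrs : ∀ r ∈ s, ‖r‖ < 1 := fun r hr => hroots r (isRoot_of_mem_roots hr)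
  have hA : ‖Φ.eval z‖ = (s.map (fun r => ‖z - r‖)).prod := by
    conv_lhs => rw [hsplit]
    rw [eval_multiset_prod, norm_multiset_prod']
    simp [Multiset.map_map, Function.comp]
  have hB : ‖(reversedPoly Φ).eval z‖ = (s.map (fun r => ‖1 - (starRingEnd ℂ) r * z‖)).prod := by
    conv_lhs => rw [hsplit, reversedPoly_prod]
    rw [eval_multiset_prod, norm_multiset_prod']
    simp [Multiset.map_map, Function.comp]
  have heq : ‖z‖ * ‖Φ.eval z‖ = ‖(reversedPoly Φ).eval z‖ := by
    have hh : z * Φ.eval z = β * (reversedPoly Φ).eval z := by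
      simp only [eval_sub, eval_mul, eval_X, eval_C] at hz; linear_combination hz
    calc ‖z‖ * ‖Φ.eval z‖ = ‖z * Φ.eval z‖ := (norm_mul _ _).symm
      _ = ‖β * (reversedPoly Φ).eval z‖ := by rw [hh]
      _ = ‖(reversedPoly Φ).eval z‖ := by rw [norm_mul, hβ, one_mul]
  by_contra hne
  set A := (s.map (fun r => ‖z - r‖)).prod with hAdef
  set B := (s.map (fun r => ‖1 - (starRingEnd ℂ) r * z‖)).prod with hBdef
  have heq' : ‖z‖ * A = B := by rw [← hA, ← hB]; exact heq
  have hAnonneg : 0 ≤ A := by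
    apply Multiset.prod_nonneg; intro x hx
    obtain ⟨a', _, rfl⟩ := Multiset.mem_map.1 hx; exact norm_nonneg _
  rcases lt_or_gt_of_ne hne with hlt | hgt
  · -- ‖z‖ < 1
    have h1 : Complex.normSq z < 1 := by
      rw [Complex.normSq_eq_norm_sq]; nlinarith [norm_nonneg z]
    have key : ∀ r ∈ s, ‖z - r‖ ≤ ‖1 - (starRingEnd ℂ) r * z‖ ∧
        0 < ‖1 - (starRingEnd ℂ) r * z‖ := by
      intro r hr
      have h2 : Complex.normSq r < 1 := by
        have := hrs r hr; rw [Complex.normSq_eq_norm_sq]; nlinarith [norm_nonneg r]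
      have hk := key_normSq z r
      have hge : Complex.normSq (z - r) < Complex.normSq (1 - (starRingEnd ℂ) r * z) := by
        nlinarith
      refine ⟨norm_le_of_normSq_le hge.le, ?_⟩
      have hpos : 0 < Complex.normSq (1 - (starRingEnd ℂ) r * z) :=
        lt_of_le_of_lt (Complex.normSq_nonneg _) hge
      rw [Complex.normSq_eq_norm_sq] at hpos
      nlinarith [norm_nonneg (1 - (starRingEnd ℂ) r * z)]
    have hAB : A ≤ B := prod_map_le s _ _ (fun a _ => norm_nonneg _) (fun a ha => (key a ha).1)
    have hBpos : 0 < B := prod_map_pos s _ (fun a ha => (key a ha).2)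
    rcases eq_or_lt_of_le hAnonneg with hA0 | hApos
    · rw [← hA0] at heq'; simp at heq'; exact absurd heq'.symm hBpos.ne'
    · have : ‖z‖ * A < A := by nlinarith
      linarith
  · -- ‖z‖ > 1
    have h1 : 1 < Complex.normSq z := by
      rw [Complex.normSq_eq_norm_sq]; nlinarith [norm_nonneg z]
    have key : ∀ r ∈ s, ‖1 - (starRingEnd ℂ) r * z‖ ≤ ‖z - r‖ ∧ 0 < ‖z - r‖ := by
      intro r hr
      have h2 : Complex.normSq r < 1 := by
        have := hrs r hr; rw [Complex.normSq_eq_norm_sq]; nlinarith [norm_nonneg r]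
      have hk := key_normSq z r
      have hge : Complex.normSq (1 - (starRingEnd ℂ) r * z) < Complex.normSq (z - r) := by
        nlinarith
      refine ⟨norm_le_of_normSq_le hge.le, ?_⟩
      have hpos : 0 < Complex.normSq (z - r) :=
        lt_of_le_of_lt (Complex.normSq_nonneg _) hge
      rw [Complex.normSq_eq_norm_sq] at hpos
      nlinarith [norm_nonneg (z - r)]
    have hBA : B ≤ A := prod_map_le s _ _ (fun a _ => norm_nonneg _) (fun a ha => (key a ha).1)
    have hApos : 0 < A := prod_map_pos s _ (fun a ha => (key a ha).2)
    have : A < ‖z‖ * A := by nlinarith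
    linarith
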